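/- Let H be a complex Hilbert space, let T1, T2 be commuting contractions on H, and set T = T1 T2. Let D_{T1}, D_{T2}, D_T be the positive square roots of I − T1*T1, I − T2*T2, I − T*T respectively. Then for every h ∈ H: (a) ‖D_{T1} h‖² + ‖D_{T2}(T1 h)‖² = ‖D_T h‖², and (b) ‖D_{T1}(T2 h)‖² + ‖D_{T2} h‖² = ‖D_T h‖². Consequently the maps W1 : D_T h ↦ (D_{T1} h, D_{T2} T1 h) and W2 : D_T h ↦ (D_{T1} T2 h, D_{T2} h) extend to linear isometries from the defect space of T into H ⊕₂ H. -/

import Mathlib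

open ContinuousLinearMap

/-- Generic defect-norm identity. -/
private lemma defect_norm_sq {H : Type*} [NormedAddCommGroup H] [InnerProductSpace ℂ H]
    [CompleteSpace H] (T D : H →L[ℂ] H) (hpos : D.IsPositive)
    (hDD : D ∘L D = 1 - (ContinuousLinearMap.adjoint T) ∘L T) (h : H) :
    ‖D h‖ ^ 2 = ‖h‖ ^ 2 - ‖T h‖ ^ 2 := by
  have hsa : ContinuousLinearMap.adjoint D = D := hpos.1.clm_adjoint_eq
  have h1 : (inner ℂ (D h) (D h) : ℂ) = inner ℂ h ((D ∘L D) h) :=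
    calc (inner ℂ (D h) (D h) : ℂ) = inner ℂ ((ContinuousLinearMap.adjoint D) h) (D h) := by rw [hsa]
      _ = inner ℂ h (D (D h)) := ContinuousLinearMap.adjoint_inner_left _ _ _
      _ = inner ℂ h ((D ∘L D) h) := rfl
  have h2 : (inner ℂ h (((ContinuousLinearMap.adjoint T) ∘L T) h) : ℂ) = inner ℂ (T h) (T h) := by
    simp [ContinuousLinearMap.adjoint_inner_right]
  have h3 : (inner ℂ (D h) (D h) : ℂ) = inner ℂ h h - inner ℂ (T h) (T h) := by
    rw [h1, hDD]; simp only [ContinuousLinearMap.sub_apply, ContinuousLinearMap.one_apply,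
      inner_sub_right, h2]
  have e1 : ‖D h‖ ^ 2 = RCLike.re (inner ℂ (D h) (D h) : ℂ) := by
    rw [← inner_self_eq_norm_sq (𝕜 := ℂ)]
  have e2 : ‖h‖ ^ 2 = RCLike.re (inner ℂ h h : ℂ) := by
    rw [← inner_self_eq_norm_sq (𝕜 := ℂ)]
  have e3 : ‖T h‖ ^ 2 = RCLike.re (inner ℂ (T h) (T h) : ℂ) := by
    rw [← inner_self_eq_norm_sq (𝕜 := ℂ)]
  rw [e1, e2, e3, h3, map_sub]

/-- Generic extension lemma: if `‖L h‖ = ‖D h‖` for all `h`, then `D h ↦ L h` extends to a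
linear isometry from the closure of the range of `D`. -/
private lemma isometry_from_defect {H F : Type*} [NormedAddCommGroup H]
    [InnerProductSpace ℂ H] [NormedAddCommGroup F] [NormedSpace ℂ F] [CompleteSpace F]
    (D : H →L[ℂ] H) (L : H →L[ℂ] F) (hnorm : ∀ h, ‖L h‖ = ‖D h‖) :
    ∃ W : (LinearMap.range (D : H →ₗ[ℂ] H)).topologicalClosure →ₗᵢ[ℂ] F,
      ∀ h : H, W ⟨D h, Submodule.le_topologicalClosure _ (LinearMap.mem_range_self (D : H →ₗ[ℂ] H) h)⟩
        = L h := by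
  have key : ∀ a b : H, D a = D b → L a = L b := by
    intro a b hab
    have : ‖L a - L b‖ = 0 := by
      rw [← L.map_sub, hnorm, D.map_sub, hab, sub_self, norm_zero]
    rwa [norm_eq_zero, sub_eq_zero] at this
  -- the map on range D
  set R := LinearMap.range (D : H →ₗ[ℂ] H) with hR
  have choose_spec : ∀ x : LinearMap.range (D : H →ₗ[ℂ] H), D (x.2.choose) = (x : H) := fun x => x.2.choose_spec
  let W0 : LinearMap.range (D : H →ₗ[ℂ] H) →ₗ[ℂ] F :=
    { toFun := fun x => L x.2.choose
      map_add' := by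
        intro x y
        have hx : D (x.2.choose) = (x : H) := (x.2).choose_spec
        have hy : D (y.2.choose) = (y : H) := (y.2).choose_spec
        have hxy : D ((x + y).2.choose) = ((x + y : LinearMap.range (D : H →ₗ[ℂ] H)) : H) := ((x + y).2).choose_spec
        refine key _ _ ?_ |>.trans (L.map_add _ _)
        rw [hxy, D.map_add, hx, hy]; rfl
      map_smul' := by
        intro c x
        have hx : D (x.2.choose) = (x : H) := (x.2).choose_spec
        have hcx : D ((c • x).2.choose) = ((c • x : LinearMap.range (D : H →ₗ[ℂ] H)) : H) := ((c • x).2).choose_spec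
        refine key _ _ ?_ |>.trans (L.map_smul _ _)
        rw [hcx, D.map_smul, hx]; rfl }
  have W0_norm : ∀ x : LinearMap.range (D : H →ₗ[ℂ] H), ‖W0 x‖ = ‖x‖ := by
    intro x
    have hx : D (x.2.choose) = (x : H) := (x.2).choose_spec
    show ‖L x.2.choose‖ = ‖x‖
    rw [hnorm, hx]
    rfl
  let W0c : LinearMap.range (D : H →ₗ[ℂ] H) →L[ℂ] F :=
    W0.mkContinuous 1 (fun x => by rw [W0_norm, one_mul])
  -- inclusion into the closure
  let Cl := (LinearMap.range (D : H →ₗ[ℂ] H)).topologicalClosure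
  let e : LinearMap.range (D : H →ₗ[ℂ] H) →L[ℂ] Cl :=
    ((LinearMap.range (D : H →ₗ[ℂ] H)).subtypeL).codRestrict Cl
      (fun x => Submodule.le_topologicalClosure _ x.2)
  have he_iso : Isometry e := fun x y => rfl
  have he_range : Subtype.val '' Set.range e = (LinearMap.range (D : H →ₗ[ℂ] H) : Set H) := by
    ext z
    constructor
    · rintro ⟨w, ⟨x, rfl⟩, rfl⟩; exact x.2
    · intro hz; exact ⟨e ⟨z, hz⟩, ⟨⟨z, hz⟩, rfl⟩, rfl⟩
  have he_dense : DenseRange e := by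
    intro x
    rw [closure_subtype]
    rw [he_range]
    exact x.2
  let g : Cl →L[ℂ] F := W0c.extend e
  have hg_eq : ∀ x : LinearMap.range (D : H →ₗ[ℂ] H), g (e x) = W0c x :=
    fun x => ContinuousLinearMap.extend_eq _ he_dense he_iso.isUniformInducing _
  have hg_iso : ∀ x : Cl, ‖g x‖ = ‖x‖ := by
    have hcl : IsClosed {x : Cl | ‖g x‖ = ‖x‖} :=
      isClosed_eq (g.continuous.norm) continuous_norm
    have hsub : Set.range e ⊆ {x : Cl | ‖g x‖ = ‖x‖} := by
      rintro _ ⟨x, rfl⟩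
      show ‖g (e x)‖ = ‖e x‖
      rw [hg_eq]
      show ‖W0 x‖ = ‖(x : H)‖
      exact W0_norm x
    intro x
    exact hcl.closure_subset_iff.mpr hsub (he_dense x)
  refine ⟨⟨g.toLinearMap, hg_iso⟩, ?_⟩
  intro h
  have hm : D h ∈ LinearMap.range (D : H →ₗ[ℂ] H) := LinearMap.mem_range_self (D : H →ₗ[ℂ] H) h
  have : (⟨D h, Submodule.le_topologicalClosure _ hm⟩ : Cl) = e ⟨D h, hm⟩ := rfl
  show g _ = L h
  rw [this, hg_eq]
  exact key _ _ (⟨D h, hm⟩ : LinearMap.range (D : H →ₗ[ℂ] H)).2.choose_spec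

theorem defect_identities_and_isometries_from_defect_space
    (H : Type*) [NormedAddCommGroup H] [InnerProductSpace ℂ H] [CompleteSpace H]
    (T1 T2 : H →L[ℂ] H) (hcomm : T1 ∘L T2 = T2 ∘L T1)
    (hT1 : ‖T1‖ ≤ 1) (hT2 : ‖T2‖ ≤ 1)
    (D1 D2 D : H →L[ℂ] H)
    (hD1pos : D1.IsPositive) (hD2pos : D2.IsPositive) (hDpos : D.IsPositive)
    (hD1 : D1 ∘L D1 = 1 - (ContinuousLinearMap.adjoint T1) ∘L T1)
    (hD2 : D2 ∘L D2 = 1 - (ContinuousLinearMap.adjoint T2) ∘L T2)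
    (hD : D ∘L D = 1 - (ContinuousLinearMap.adjoint (T1 ∘L T2)) ∘L (T1 ∘L T2)) :
    (∀ h : H, ‖D1 h‖ ^ 2 + ‖D2 (T1 h)‖ ^ 2 = ‖D h‖ ^ 2) ∧
    (∀ h : H, ‖D1 (T2 h)‖ ^ 2 + ‖D2 h‖ ^ 2 = ‖D h‖ ^ 2) ∧
    (∃ W1 W2 : (LinearMap.range (D : H →ₗ[ℂ] H)).topologicalClosure →ₗᵢ[ℂ] WithLp 2 (H × H),
      (∀ h : H,
        W1 ⟨D h, Submodule.le_topologicalClosure _ (LinearMap.mem_range_self (D : H →ₗ[ℂ] H) h)⟩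
          = (WithLp.toLp 2 (D1 h, D2 (T1 h)) : WithLp 2 (H × H))) ∧
      (∀ h : H,
        W2 ⟨D h, Submodule.le_topologicalClosure _ (LinearMap.mem_range_self (D : H →ₗ[ℂ] H) h)⟩
          = (WithLp.toLp 2 (D1 (T2 h), D2 h) : WithLp 2 (H × H)))) := by
  have n1 : ∀ h : H, ‖D1 h‖ ^ 2 = ‖h‖ ^ 2 - ‖T1 h‖ ^ 2 := defect_norm_sq T1 D1 hD1pos hD1
  have n2 : ∀ h : H, ‖D2 h‖ ^ 2 = ‖h‖ ^ 2 - ‖T2 h‖ ^ 2 := defect_norm_sq T2 D2 hD2pos hD2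
  have nD : ∀ h : H, ‖D h‖ ^ 2 = ‖h‖ ^ 2 - ‖T1 (T2 h)‖ ^ 2 := defect_norm_sq (T1 ∘L T2) D hDpos hD
  have hc : ∀ h : H, T1 (T2 h) = T2 (T1 h) := fun h => by simpa using congrArg (fun A : H →L[ℂ] H => A h) hcomm
  have ida : ∀ h : H, ‖D1 h‖ ^ 2 + ‖D2 (T1 h)‖ ^ 2 = ‖D h‖ ^ 2 := by
    intro h
    rw [n1, n2, nD, ← hc]
    ring
  have idb : ∀ h : H, ‖D1 (T2 h)‖ ^ 2 + ‖D2 h‖ ^ 2 = ‖D h‖ ^ 2 := by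
    intro h
    rw [n1, n2, nD]
    ring
  refine ⟨ida, idb, ?_⟩
  let ι : H × H →L[ℂ] WithLp 2 (H × H) :=
    (WithLp.prodContinuousLinearEquiv 2 ℂ H H).symm.toContinuousLinearMap
  have hι : ∀ p : H × H, ‖ι p‖ ^ 2 = ‖p.1‖ ^ 2 + ‖p.2‖ ^ 2 := by
    intro p
    rw [WithLp.prod_norm_sq_eq_of_L2]
    rfl
  let L1 : H →L[ℂ] WithLp 2 (H × H) := ι ∘L (D1.prod (D2 ∘L T1))
  let L2 : H →L[ℂ] WithLp 2 (H × H) := ι ∘L ((D1 ∘L T2).prod D2)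
  have hL1 : ∀ h : H, ‖L1 h‖ = ‖D h‖ := by
    intro h
    rw [← Real.sqrt_sq (norm_nonneg (L1 h)), ← Real.sqrt_sq (norm_nonneg (D h))]
    congr 1
    show ‖ι (D1 h, D2 (T1 h))‖ ^ 2 = ‖D h‖ ^ 2
    rw [hι]
    exact ida h
  have hL2 : ∀ h : H, ‖L2 h‖ = ‖D h‖ := by
    intro h
    rw [← Real.sqrt_sq (norm_nonneg (L2 h)), ← Real.sqrt_sq (norm_nonneg (D h))]
    congr 1
    show ‖ι (D1 (T2 h), D2 h)‖ ^ 2 = ‖D h‖ ^ 2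
    rw [hι]
    exact idb h
  obtain ⟨W1, hW1⟩ := isometry_from_defect D L1 hL1
  obtain ⟨W2, hW2⟩ := isometry_from_defect D L2 hL2
  exact ⟨W1, W2, fun h => hW1 h, fun h => hW2 h⟩
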